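/- The two argmax characterizations of the BH procedure coincide: max{i ∈ {0,1,…,m} : i = #S(i·α/m)} = r_BH, where the left-hand maximum is well defined because i = 0 always satisfies 0 = #S(0). -/

import Mathlib

open scoped Classical

/-- `#S(t)`: the number of elements of the multiset `C` that are strictly less than `t`. -/
noncomputable def countBelow (C : Multiset ℝ) (t : ℝ) : ℕ :=
  (C.filter (fun p => p < t)).card

/-- The `k`-th smallest element (1-indexed order statistic, with multiplicity) of `D`. -/
noncomputable def orderStat (D : Multiset ℝ) (k : ℕ) : ℝ :=
  (D.sort (· ≤ ·)).getD (k - 1) 0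

/-- The Benjamini–Hochberg index at level `α`:
`max {i ∈ {1,…,m} : p_(i) < i·α/m}`, with value `0` if this set is empty. -/
noncomputable def rBH (α : ℝ) (C : Multiset ℝ) : ℕ :=
  ((Finset.Icc 1 C.card).filter
    (fun i => orderStat C i < (i : ℝ) * α / (C.card : ℝ))).sup id

lemma sorted_getD_lt_iff (l : List ℝ) (hl : l.Pairwise (· ≤ ·)) (t : ℝ) (i : ℕ)
    (hi : 1 ≤ i) (him : i ≤ l.length) :
    l.getD (i-1) 0 < t ↔ i ≤ (l.filter (fun p => p < t)).length := by
  have hidx : i - 1 < l.length := by omega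
  have hgd : l.getD (i-1) 0 = l[i-1] := List.getD_eq_getElem l 0 hidx
  have mono : ∀ a b (ha : a < l.length) (hb : b < l.length), a ≤ b → l[a] ≤ l[b] := by
    intro a b ha hb hab
    rcases eq_or_lt_of_le hab with h | h
    · subst h; exact le_refl _
    · exact List.pairwise_iff_getElem.mp hl a b ha hb h
  rw [hgd]
  constructor
  · intro h
    have hsplit := List.take_append_drop i l
    have htf : (l.take i).filter (fun p => p < t) = l.take i := by
      apply List.filter_eq_self.mpr
      intro a ha
      rw [List.mem_take_iff_getElem] at ha
      obtain ⟨j, hj, rfl⟩ := ha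
      have hjl : j < l.length := lt_of_lt_of_le (lt_of_lt_of_le hj (min_le_left _ _)) him
      have : l[j] ≤ l[i-1] := mono j (i-1) hjl hidx (by
        have := lt_of_lt_of_le hj (min_le_left i l.length); omega)
      simpa using lt_of_le_of_lt this h
    calc i = ((l.take i).filter (fun p => p < t)).length := by
              rw [htf, List.length_take]; omega
      _ ≤ (l.filter (fun p => p < t)).length := by
              conv_rhs => rw [← hsplit]
              rw [List.filter_append, List.length_append]
              omega
  · intro h
    by_contra hcon
    push_neg at hcon
    have hdrop : (l.drop (i-1)).filter (fun p => p < t) = [] := by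
      apply List.filter_eq_nil_iff.mpr
      intro a ha
      rw [List.mem_iff_getElem] at ha
      obtain ⟨j, hj, rfl⟩ := ha
      rw [List.getElem_drop]
      have hjl : i - 1 + j < l.length := by
        have := hj; rw [List.length_drop] at this; omega
      have : l[i-1] ≤ l[i-1+j] := mono (i-1) (i-1+j) hidx hjl (by omega)
      simp only [decide_eq_true_eq, not_lt]
      exact le_trans hcon this
    have : (l.filter (fun p => p < t)).length ≤ i - 1 := by
      conv_lhs => rw [← List.take_append_drop (i-1) l]
      rw [List.filter_append, hdrop, List.length_append, List.length_nil]
      have : (l.take (i-1)).length = min (i-1) l.length := List.length_take  -- length (take) = min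
      have h2 : ((l.take (i-1)).filter (fun p => p < t)).length ≤ (l.take (i-1)).length :=
        List.length_filter_le _ _
      rw [List.length_take] at h2
      omega
    omega

lemma orderStat_lt_iff (C : Multiset ℝ) (t : ℝ) (i : ℕ) (hi : 1 ≤ i) (him : i ≤ C.card) :
    orderStat C i < t ↔ i ≤ countBelow C t := by
  classical
  have h1 : (↑(C.sort (· ≤ ·)) : Multiset ℝ) = C := Multiset.sort_eq _ _
  have hlen : (C.sort (· ≤ ·)).length = C.card := Multiset.length_sort _
  have hcount : countBelow C t = ((C.sort (· ≤ ·)).filter (fun p => p < t)).length := by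
    unfold countBelow
    conv_lhs => rw [← h1]
    rw [Multiset.filter_coe, Multiset.coe_card]
  rw [hcount]
  exact sorted_getD_lt_iff _ (Multiset.pairwise_sort _ _) t i hi (by omega)

/-- The two argmax characterizations of the BH procedure coincide:
`max {i ∈ {0,1,…,m} : i = #S(i·α/m)} = r_BH` (the left-hand maximum is well defined
because `i = 0` always satisfies `0 = #S(0)`). -/
theorem argmax_fixedPoint_eq_rBH
    (α : ℝ) (hα0 : 0 < α) (hα1 : α < 1)
    (C : Multiset ℝ) (hC : ∀ p ∈ C, 0 ≤ p ∧ p ≤ 1)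
    (m : ℕ) (hm : m = C.card) :
    ((Finset.Icc 0 m).filter
        (fun i : ℕ => i = countBelow C ((i : ℝ) * α / (m : ℝ)))).sup id
      = rBH α C := by
  subst hm
  apply le_antisymm
  · apply Finset.sup_le
    intro i hi
    rw [Finset.mem_filter, Finset.mem_Icc] at hi
    obtain ⟨⟨-, him⟩, heq⟩ := hi
    rcases Nat.eq_zero_or_pos i with h0 | h1
    · simp [h0]
    · have hlt : orderStat C i < (i : ℝ) * α / (C.card : ℝ) :=
        (orderStat_lt_iff C _ i h1 him).mpr (le_of_eq heq)
      exact Finset.le_sup (f := id)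
        (Finset.mem_filter.mpr ⟨Finset.mem_Icc.mpr ⟨h1, him⟩, hlt⟩)
  · set r := rBH α C with hr
    have hrm : r ≤ C.card := by
      apply Finset.sup_le
      intro b hb
      rw [Finset.mem_filter, Finset.mem_Icc] at hb
      exact hb.1.2
    have key : r = countBelow C ((r : ℝ) * α / (C.card : ℝ)) := by
      rcases Nat.eq_zero_or_pos r with h0 | h1
      · rw [h0]
        have : ((0 : ℕ) : ℝ) * α / (C.card : ℝ) = 0 := by simp
        rw [this]
        unfold countBelow
        symm
        rw [Multiset.card_eq_zero, Multiset.filter_eq_nil]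
        intro p hp
        exact not_lt.mpr (hC p hp).1
      · have hne : (((Finset.Icc 1 C.card).filter
            (fun i => orderStat C i < (i : ℝ) * α / (C.card : ℝ)))).Nonempty := by
          by_contra h
          rw [Finset.not_nonempty_iff_eq_empty] at h
          rw [hr] at h1
          unfold rBH at h1
          rw [h] at h1
          simp at h1
        obtain ⟨b, hb, hbr⟩ := Finset.exists_mem_eq_sup _ hne id
        have hrb : r = b := hbr
        rw [Finset.mem_filter, Finset.mem_Icc] at hb
        rw [← hrb] at hb
        obtain ⟨⟨hb1, hb2⟩, hb3⟩ := hb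
        have hcardpos : (0 : ℝ) < (C.card : ℝ) := by
          exact_mod_cast lt_of_lt_of_le hb1 hb2
        have hle1 : r ≤ countBelow C ((r : ℝ) * α / (C.card : ℝ)) :=
          (orderStat_lt_iff C _ r hb1 hb2).mp hb3
        have hle2 : countBelow C ((r : ℝ) * α / (C.card : ℝ)) ≤ r := by
          by_contra h
          push_neg at h
          have hkcard : countBelow C ((r : ℝ) * α / (C.card : ℝ)) ≤ C.card := by
            unfold countBelow
            exact Multiset.card_le_card (Multiset.filter_le _ _)
          have hk1 : orderStat C (countBelow C ((r : ℝ) * α / (C.card : ℝ))) < (r : ℝ) * α / (C.card : ℝ) :=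
            (orderStat_lt_iff C _ _ (lt_of_le_of_lt hb1 h).le hkcard).mpr le_rfl
          have hk2 : orderStat C (countBelow C ((r : ℝ) * α / (C.card : ℝ))) < ((countBelow C ((r : ℝ) * α / (C.card : ℝ))) : ℝ) * α / (C.card : ℝ) := by
            refine lt_of_lt_of_le hk1 ?_
            gcongr
          have : countBelow C ((r : ℝ) * α / (C.card : ℝ)) ≤ r :=
            Finset.le_sup (f := id)
              (Finset.mem_filter.mpr ⟨Finset.mem_Icc.mpr ⟨(lt_of_le_of_lt hb1 h).le, hkcard⟩, hk2⟩)
          exact absurd this (not_le.mpr h)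
        omega
    refine Finset.le_sup (f := id) (Finset.mem_filter.mpr ⟨Finset.mem_Icc.mpr ⟨Nat.zero_le _, hrm⟩, key⟩)
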